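/- Let H_p denote the non-normalized Walsh–Hadamard transform of ℝ^{2^p}, defined by H₁ = [[1,1],[1,−1]] and H_{p+1} = [[H_p, H_p],[H_p, −H_p]]. In floating-point arithmetic with unit roundoff e, the recursively computed transform satisfies the normwise backward error bound: for all x ∈ ℝ^{2^p}, fl(H_p x) = H_p(x + Δx) with ‖Δx‖ ≤ γ_p ‖x‖, where γ_p = pe/(1 − pe). Consequently, the normalized Hadamard transform H = 2^{−p/2} H_p applied with a final scaling satisfies fl(Hx) = H(x + Δx) with ‖Δx‖ ≤ γ_{p+2}‖x‖. -/

import Mathlib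

open Matrix

/-- Index type for vectors of length `2^p`, built recursively by doubling. -/
def V : ℕ → Type
  | 0 => Unit
  | p + 1 => V p ⊕ V p

instance instFintypeV : ∀ p, Fintype (V p)
  | 0 => inferInstanceAs (Fintype Unit)
  | p + 1 =>
    letI := instFintypeV p
    inferInstanceAs (Fintype (V p ⊕ V p))

/-- Euclidean norm of a finitely supported real vector. -/
noncomputable def eucNorm {k : Type*} [Fintype k] (v : k → ℝ) : ℝ := Real.sqrt (v ⬝ᵥ v)

/-- The exact non-normalized Walsh–Hadamard transform `H_p` of `ℝ^{2^p}`: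
`H₀ = [1]`, `H_{p+1}(x ⊘ y) = (H_p x + H_p y) ⊘ (H_p x - H_p y)`. -/
noncomputable def Hexact : (p : ℕ) → (V p → ℝ) → (V p → ℝ)
  | 0, x => x
  | p + 1, z =>
    Sum.elim
      (fun i => Hexact p (fun a => z (Sum.inl a)) i + Hexact p (fun a => z (Sum.inr a)) i)
      (fun i => Hexact p (fun a => z (Sum.inl a)) i - Hexact p (fun a => z (Sum.inr a)) i)

/-- The quantity `γ_k = k e / (1 - k e)` of worst-case rounding error analysis. -/
noncomputable def gam (e : ℝ) (k : ℕ) : ℝ := k * e / (1 - k * e)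


/- ------------ auxiliary lemmas ------------- -/

lemma dot_self_nonneg' {k : Type*} [Fintype k] (v : k → ℝ) : 0 ≤ v ⬝ᵥ v :=
  Finset.sum_nonneg fun i _ => mul_self_nonneg _

lemma eucNorm_nonneg' {k : Type*} [Fintype k] (v : k → ℝ) : 0 ≤ eucNorm v := Real.sqrt_nonneg _

lemma eucNorm_sq' {k : Type*} [Fintype k] (v : k → ℝ) : eucNorm v ^ 2 = v ⬝ᵥ v :=
  Real.sq_sqrt (dot_self_nonneg' v)

lemma eucNorm_le_of_dot {k : Type*} [Fintype k] {a b : k → ℝ} {K : ℝ} (hK : 0 ≤ K)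
    (h : a ⬝ᵥ a ≤ K ^ 2 * (b ⬝ᵥ b)) : eucNorm a ≤ K * eucNorm b := by
  unfold eucNorm
  calc Real.sqrt (a ⬝ᵥ a) ≤ Real.sqrt (K^2 * (b ⬝ᵥ b)) := Real.sqrt_le_sqrt h
    _ = K * Real.sqrt (b ⬝ᵥ b) := by rw [Real.sqrt_mul (sq_nonneg K), Real.sqrt_sq hK]

lemma dot_le_of_eucNorm {k : Type*} [Fintype k] {a b : k → ℝ} {K : ℝ} (hK : 0 ≤ K)
    (h : eucNorm a ≤ K * eucNorm b) : a ⬝ᵥ a ≤ K ^ 2 * (b ⬝ᵥ b) := by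
  have h1 := eucNorm_sq' a
  have h2 := eucNorm_sq' b
  nlinarith [eucNorm_nonneg' a, eucNorm_nonneg' b, mul_self_le_mul_self (eucNorm_nonneg' a) h]

lemma eucNorm_eq_norm {k : Type*} [Fintype k] (v : k → ℝ) :
    eucNorm v = ‖(WithLp.equiv 2 (k → ℝ)).symm v‖ := by
  unfold eucNorm
  rw [EuclideanSpace.norm_eq]
  congr 1
  simp [dotProduct, Real.norm_eq_abs, sq_abs, sq]

lemma eucNorm_triangle {k : Type*} [Fintype k] (a b : k → ℝ) :
    eucNorm (fun i => a i + b i) ≤ eucNorm a + eucNorm b := by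
  rw [eucNorm_eq_norm, eucNorm_eq_norm, eucNorm_eq_norm]
  exact norm_add_le ((WithLp.equiv 2 (k → ℝ)).symm a) ((WithLp.equiv 2 (k → ℝ)).symm b)

lemma eucNorm_add_bound {k : Type*} [Fintype k] (u U : k → ℝ) :
    eucNorm u ≤ eucNorm U + eucNorm (fun i => u i - U i) := by
  have h := eucNorm_triangle U (fun i => u i - U i)
  have : (fun i => U i + (u i - U i)) = u := by funext i; ring
  rwa [this] at h

lemma eucNorm_smul' {k : Type*} [Fintype k] (c : ℝ) (v : k → ℝ) :
    eucNorm (fun i => c * v i) = |c| * eucNorm v := by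
  unfold eucNorm
  have : (fun i => c * v i) ⬝ᵥ (fun i => c * v i) = c^2 * (v ⬝ᵥ v) := by
    simp only [dotProduct, Finset.mul_sum]
    exact Finset.sum_congr rfl fun i _ => by ring
  rw [this, Real.sqrt_mul (sq_nonneg c), Real.sqrt_sq_eq_abs]

lemma dot_mul_le {k : Type*} [Fintype k] (c w : k → ℝ) (K : ℝ) (hK : 0 ≤ K)
    (h : ∀ i, |c i| ≤ K) :
    (fun i => c i * w i) ⬝ᵥ (fun i => c i * w i) ≤ K^2 * (w ⬝ᵥ w) := by
  simp only [dotProduct, Finset.mul_sum]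
  refine Finset.sum_le_sum fun i _ => ?_
  have h1 : c i * c i ≤ K * K := by
    calc c i * c i = |c i| * |c i| := (abs_mul_abs_self _).symm
      _ ≤ K * K := mul_self_le_mul_self (abs_nonneg _) (h i)
  nlinarith [mul_self_nonneg (w i), mul_self_nonneg (c i)]

lemma eucNorm_mul_le {k : Type*} [Fintype k] (c w : k → ℝ) (K : ℝ) (hK : 0 ≤ K)
    (h : ∀ i, |c i| ≤ K) :
    eucNorm (fun i => c i * w i) ≤ K * eucNorm w :=
  eucNorm_le_of_dot hK (dot_mul_le c w K hK h)

lemma dot_par {k : Type*} [Fintype k] (a b : k → ℝ) :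
    (fun i => a i + b i) ⬝ᵥ (fun i => a i + b i) + (fun i => a i - b i) ⬝ᵥ (fun i => a i - b i)
      = 2 * (a ⬝ᵥ a) + 2 * (b ⬝ᵥ b) := by
  simp only [dotProduct, Finset.mul_sum, ← Finset.sum_add_distrib]
  exact Finset.sum_congr rfl fun i _ => by ring

lemma sum_V_succ (p : ℕ) (f : V (p+1) → ℝ) :
    ∑ i, f i = (∑ i, f (Sum.inl i)) + (∑ i, f (Sum.inr i)) :=
  Fintype.sum_sum_type f

lemma dot_V_succ (p : ℕ) (z w : V (p+1) → ℝ) :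
    z ⬝ᵥ w = (fun a => z (Sum.inl a)) ⬝ᵥ (fun a => w (Sum.inl a))
      + (fun a => z (Sum.inr a)) ⬝ᵥ (fun a => w (Sum.inr a)) := by
  simpa [dotProduct] using sum_V_succ p (fun i => z i * w i)

lemma dot_sum_elim (p : ℕ) (f g f' g' : V p → ℝ) :
    (Sum.elim f g : V (p+1) → ℝ) ⬝ᵥ (Sum.elim f' g' : V (p+1) → ℝ) = f ⬝ᵥ f' + g ⬝ᵥ g' := by
  exact dot_V_succ p (Sum.elim f g) (Sum.elim f' g')

lemma sqrt_two_pow (p : ℕ) : Real.sqrt (2^p) = Real.sqrt 2 ^ p := by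
  induction p with
  | zero => simp
  | succ p ih => rw [pow_succ, pow_succ, Real.sqrt_mul (by positivity), ih]

lemma sqrt_two_pow_sq (p : ℕ) : Real.sqrt 2 ^ p * Real.sqrt 2 ^ p = 2 ^ p := by
  rw [← mul_pow, Real.mul_self_sqrt (by norm_num)]

/- ------------ Hexact lemmas ------------- -/

lemma Hexact_lin (p : ℕ) (c d : ℝ) (x y : V p → ℝ) :
    Hexact p (fun i => c * x i + d * y i) = fun i => c * Hexact p x i + d * Hexact p y i := by
  induction p with
  | zero => rfl
  | succ p ih =>
    funext i
    cases i with
    | inl i => simp only [Hexact, Sum.elim_inl, ih]; ring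
    | inr i => simp only [Hexact, Sum.elim_inr, ih]; ring

lemma Hexact_add (p : ℕ) (x y : V p → ℝ) :
    Hexact p (fun i => x i + y i) = fun i => Hexact p x i + Hexact p y i := by
  have h := Hexact_lin p 1 1 x y
  simpa using h

lemma Hexact_sub (p : ℕ) (x y : V p → ℝ) :
    Hexact p (fun i => x i - y i) = fun i => Hexact p x i - Hexact p y i := by
  have h := Hexact_lin p 1 (-1) x y
  simp only [one_mul, neg_one_mul, ← sub_eq_add_neg] at h
  exact h

lemma Hexact_smul (p : ℕ) (c : ℝ) (x : V p → ℝ) :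
    Hexact p (fun i => c * x i) = fun i => c * Hexact p x i := by
  have h := Hexact_lin p c 0 x x
  simpa using h

lemma Hexact_invol (p : ℕ) (x : V p → ℝ) :
    Hexact p (Hexact p x) = fun i => (2:ℝ)^p * x i := by
  induction p with
  | zero => funext i; simp [Hexact]
  | succ p ih =>
    funext i
    cases i with
    | inl i =>
      simp only [Hexact, Sum.elim_inl, Sum.elim_inr]
      rw [show (fun a => Hexact p (fun b => x (Sum.inl b)) a + Hexact p (fun b => x (Sum.inr b)) a)
            = (fun a => Hexact p (fun b => x (Sum.inl b)) a + Hexact p (fun b => x (Sum.inr b)) a) from rfl]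
      rw [Hexact_add p (Hexact p (fun b => x (Sum.inl b))) (Hexact p (fun b => x (Sum.inr b))),
          Hexact_sub p (Hexact p (fun b => x (Sum.inl b))) (Hexact p (fun b => x (Sum.inr b))),
          ih, ih]
      ring
    | inr i =>
      simp only [Hexact, Sum.elim_inl, Sum.elim_inr]
      rw [Hexact_add p (Hexact p (fun b => x (Sum.inl b))) (Hexact p (fun b => x (Sum.inr b))),
          Hexact_sub p (Hexact p (fun b => x (Sum.inl b))) (Hexact p (fun b => x (Sum.inr b))),
          ih, ih]
      ring

lemma Hexact_dot (p : ℕ) (x : V p → ℝ) :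
    Hexact p x ⬝ᵥ Hexact p x = 2^p * (x ⬝ᵥ x) := by
  induction p with
  | zero => simp [Hexact]
  | succ p ih =>
    rw [show Hexact (p+1) x = Sum.elim
        (fun i => Hexact p (fun a => x (Sum.inl a)) i + Hexact p (fun a => x (Sum.inr a)) i)
        (fun i => Hexact p (fun a => x (Sum.inl a)) i - Hexact p (fun a => x (Sum.inr a)) i)
      from rfl]
    erw [dot_sum_elim, dot_par, ih, ih, dot_V_succ p x x]
    ring

lemma eucNorm_Hexact (p : ℕ) (x : V p → ℝ) :
    eucNorm (Hexact p x) = Real.sqrt 2 ^ p * eucNorm x := by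
  unfold eucNorm
  rw [Hexact_dot, Real.sqrt_mul (by positivity), sqrt_two_pow]

lemma pow_one_sub_le (e : ℝ) (he : 0 ≤ e) : ∀ q : ℕ, (1+e)^q * (1 - (q:ℝ)*e) ≤ 1 := by
  intro q
  induction q with
  | zero => simp
  | succ q ih =>
    have h1 : (1+e) * (1 - ((q:ℝ)+1)*e) ≤ 1 - (q:ℝ)*e := by nlinarith [mul_self_nonneg e, (Nat.cast_nonneg q : (0:ℝ) ≤ q)]
    have h2 : (0:ℝ) ≤ (1+e)^q := by positivity
    have h3 : (1+e)^(q+1) * (1 - ((q:ℝ)+1)*e) = (1+e)^q * ((1+e) * (1 - ((q:ℝ)+1)*e)) := by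
      rw [pow_succ]; ring
    push_cast
    rw [h3]
    calc (1+e)^q * ((1+e) * (1 - ((q:ℝ)+1)*e)) ≤ (1+e)^q * (1 - (q:ℝ)*e) :=
          mul_le_mul_of_nonneg_left h1 h2
      _ ≤ 1 := ih

lemma cp_le_gam (e : ℝ) (he : 0 ≤ e) (p : ℕ) (h : (p:ℝ)*e < 1) :
    (1+e)^p - 1 ≤ gam e p := by
  have key := pow_one_sub_le e he p
  have h' : (0:ℝ) < 1 - (p:ℝ)*e := by linarith
  rw [gam, le_div_iff₀ h']
  nlinarith

lemma fwd (e : ℝ) (he : 0 ≤ e)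
    (Hhat : (p : ℕ) → (V p → ℝ) → (V p → ℝ))
    (hbase : ∀ x : V 0 → ℝ, Hhat 0 x = x)
    (hstep : ∀ p (z : V (p + 1) → ℝ), ∃ δ₁ δ₂ : V p → ℝ,
      (∀ i, |δ₁ i| ≤ e) ∧ (∀ i, |δ₂ i| ≤ e) ∧
      (∀ i : V p, Hhat (p + 1) z (Sum.inl i) =
        (1 + δ₁ i) *
          (Hhat p (fun a => z (Sum.inl a)) i + Hhat p (fun a => z (Sum.inr a)) i)) ∧
      (∀ i : V p, Hhat (p + 1) z (Sum.inr i) =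
        (1 + δ₂ i) *
          (Hhat p (fun a => z (Sum.inl a)) i - Hhat p (fun a => z (Sum.inr a)) i))) :
    ∀ p (x : V p → ℝ),
      eucNorm (fun i => Hhat p x i - Hexact p x i)
        ≤ ((1+e)^p - 1) * Real.sqrt 2 ^ p * eucNorm x := by
  intro p
  induction p with
  | zero =>
    intro x
    rw [hbase]
    have h0 : (fun i => x i - Hexact 0 x i) = fun _ : V 0 => (0:ℝ) := by
      funext i; show x i - x i = 0; ring
    rw [h0]
    simp [eucNorm, dotProduct]
  | succ p ih =>
    intro z
    obtain ⟨δ₁, δ₂, hd₁, hd₂, h1, h2⟩ := hstep p z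
    have hs2 : Real.sqrt 2 ^ 2 = 2 := Real.sq_sqrt (by norm_num)
    have hc0 : (0:ℝ) ≤ (1+e)^p - 1 := by
      have := one_le_pow₀ (by linarith : (1:ℝ) ≤ 1+e) (n := p); linarith
    have heL := ih (fun a => z (Sum.inl a))
    have heR := ih (fun a => z (Sum.inr a))
    have huB : eucNorm (Hhat p (fun a => z (Sum.inl a)))
        ≤ (1+e)^p * Real.sqrt 2 ^ p * eucNorm (fun a => z (Sum.inl a)) := by
      have t := eucNorm_add_bound (Hhat p (fun a => z (Sum.inl a))) (Hexact p (fun a => z (Sum.inl a)))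
      have hU := eucNorm_Hexact p (fun a => z (Sum.inl a))
      linarith
    have hvB : eucNorm (Hhat p (fun a => z (Sum.inr a)))
        ≤ (1+e)^p * Real.sqrt 2 ^ p * eucNorm (fun a => z (Sum.inr a)) := by
      have t := eucNorm_add_bound (Hhat p (fun a => z (Sum.inr a))) (Hexact p (fun a => z (Sum.inr a)))
      have hU := eucNorm_Hexact p (fun a => z (Sum.inr a))
      linarith
    have deL := dot_le_of_eucNorm (mul_nonneg hc0 (by positivity)) heL
    have deR := dot_le_of_eucNorm (mul_nonneg hc0 (by positivity)) heR
    have duB := dot_le_of_eucNorm (by positivity) huB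
    have dvB := dot_le_of_eucNorm (by positivity) hvB
    have hzz := dot_V_succ p z z
    -- decomposition
    have hE : (fun i => Hhat (p+1) z i - Hexact (p+1) z i)
        = fun i =>
          (Sum.elim
            (fun j => (Hhat p (fun a => z (Sum.inl a)) j - Hexact p (fun a => z (Sum.inl a)) j)
                    + (Hhat p (fun a => z (Sum.inr a)) j - Hexact p (fun a => z (Sum.inr a)) j))
            (fun j => (Hhat p (fun a => z (Sum.inl a)) j - Hexact p (fun a => z (Sum.inl a)) j)
                    - (Hhat p (fun a => z (Sum.inr a)) j - Hexact p (fun a => z (Sum.inr a)) j))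
            : V (p+1) → ℝ) i
          + (Sum.elim
            (fun j => δ₁ j * (Hhat p (fun a => z (Sum.inl a)) j + Hhat p (fun a => z (Sum.inr a)) j))
            (fun j => δ₂ j * (Hhat p (fun a => z (Sum.inl a)) j - Hhat p (fun a => z (Sum.inr a)) j))
            : V (p+1) → ℝ) i := by
      funext i
      cases i with
      | inl i => simp only [Hexact, Sum.elim_inl]; rw [h1 i]; ring
      | inr i => simp only [Hexact, Sum.elim_inr]; rw [h2 i]; ring
    have hA : eucNorm (Sum.elim
            (fun j => (Hhat p (fun a => z (Sum.inl a)) j - Hexact p (fun a => z (Sum.inl a)) j)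
                    + (Hhat p (fun a => z (Sum.inr a)) j - Hexact p (fun a => z (Sum.inr a)) j))
            (fun j => (Hhat p (fun a => z (Sum.inl a)) j - Hexact p (fun a => z (Sum.inl a)) j)
                    - (Hhat p (fun a => z (Sum.inr a)) j - Hexact p (fun a => z (Sum.inr a)) j))
            : V (p+1) → ℝ)
        ≤ (((1+e)^p - 1) * Real.sqrt 2 ^ p * Real.sqrt 2) * eucNorm z := by
      apply eucNorm_le_of_dot (by positivity)
      rw [dot_sum_elim]; erw [hzz]
      have hpar := dot_par
        (fun j => Hhat p (fun a => z (Sum.inl a)) j - Hexact p (fun a => z (Sum.inl a)) j)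
        (fun j => Hhat p (fun a => z (Sum.inr a)) j - Hexact p (fun a => z (Sum.inr a)) j)
      have hKsq : (((1+e)^p - 1) * Real.sqrt 2 ^ p * Real.sqrt 2)^2
          = 2 * (((1+e)^p - 1) * Real.sqrt 2 ^ p)^2 := by
        rw [mul_pow, hs2]; ring
      rw [hKsq]
      linarith [hpar, deL, deR]
    have hB : eucNorm (Sum.elim
            (fun j => δ₁ j * (Hhat p (fun a => z (Sum.inl a)) j + Hhat p (fun a => z (Sum.inr a)) j))
            (fun j => δ₂ j * (Hhat p (fun a => z (Sum.inl a)) j - Hhat p (fun a => z (Sum.inr a)) j))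
            : V (p+1) → ℝ)
        ≤ (e * ((1+e)^p * Real.sqrt 2 ^ p) * Real.sqrt 2) * eucNorm z := by
      apply eucNorm_le_of_dot (by positivity)
      rw [dot_sum_elim]; erw [hzz]
      have b1 := dot_mul_le δ₁
        (fun j => Hhat p (fun a => z (Sum.inl a)) j + Hhat p (fun a => z (Sum.inr a)) j) e he hd₁
      have b2 := dot_mul_le δ₂
        (fun j => Hhat p (fun a => z (Sum.inl a)) j - Hhat p (fun a => z (Sum.inr a)) j) e he hd₂
      have hparm : e^2 * ((fun j => Hhat p (fun a => z (Sum.inl a)) j + Hhat p (fun a => z (Sum.inr a)) j)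
              ⬝ᵥ (fun j => Hhat p (fun a => z (Sum.inl a)) j + Hhat p (fun a => z (Sum.inr a)) j))
            + e^2 * ((fun j => Hhat p (fun a => z (Sum.inl a)) j - Hhat p (fun a => z (Sum.inr a)) j)
              ⬝ᵥ (fun j => Hhat p (fun a => z (Sum.inl a)) j - Hhat p (fun a => z (Sum.inr a)) j))
          = 2 * e^2 * (Hhat p (fun a => z (Sum.inl a)) ⬝ᵥ Hhat p (fun a => z (Sum.inl a)))
            + 2 * e^2 * (Hhat p (fun a => z (Sum.inr a)) ⬝ᵥ Hhat p (fun a => z (Sum.inr a))) := by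
        have hpar := dot_par (Hhat p (fun a => z (Sum.inl a))) (Hhat p (fun a => z (Sum.inr a)))
        nlinarith [hpar]
      have t1 := mul_le_mul_of_nonneg_left duB (by positivity : (0:ℝ) ≤ 2 * e^2)
      have t2 := mul_le_mul_of_nonneg_left dvB (by positivity : (0:ℝ) ≤ 2 * e^2)
      have hKsq : (e * ((1+e)^p * Real.sqrt 2 ^ p) * Real.sqrt 2)^2
          = 2 * e^2 * ((1+e)^p * Real.sqrt 2 ^ p)^2 := by
        rw [mul_pow, hs2]; ring
      rw [hKsq]
      linarith [b1, b2, hparm, t1, t2]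
    rw [hE]
    have tri := eucNorm_triangle
        (Sum.elim
            (fun j => (Hhat p (fun a => z (Sum.inl a)) j - Hexact p (fun a => z (Sum.inl a)) j)
                    + (Hhat p (fun a => z (Sum.inr a)) j - Hexact p (fun a => z (Sum.inr a)) j))
            (fun j => (Hhat p (fun a => z (Sum.inl a)) j - Hexact p (fun a => z (Sum.inl a)) j)
                    - (Hhat p (fun a => z (Sum.inr a)) j - Hexact p (fun a => z (Sum.inr a)) j))
            : V (p+1) → ℝ)
        (Sum.elim
            (fun j => δ₁ j * (Hhat p (fun a => z (Sum.inl a)) j + Hhat p (fun a => z (Sum.inr a)) j))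
            (fun j => δ₂ j * (Hhat p (fun a => z (Sum.inl a)) j - Hhat p (fun a => z (Sum.inr a)) j))
            : V (p+1) → ℝ)
    rw [pow_succ (1+e), pow_succ (Real.sqrt 2)]
    refine le_trans tri (le_trans (add_le_add hA hB) ?_)
    nlinarith [tri, hA, hB, eucNorm_nonneg' z]

/-- any floating-point implementation `Hhat` of the recursive (butterfly)
Walsh–Hadamard transform, with unit roundoff `e`, is normwise backward stable:
`fl(H_p x) = H_p(x + Δx)` with `‖Δx‖ ≤ γ_p ‖x‖`; and the normalized transform
`H = 2^{-p/2} H_p`, computed with a final scaling costing at most two extra rounding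
errors per entry, satisfies `fl(Hx) = H(x + Δx)` with `‖Δx‖ ≤ γ_{p+2} ‖x‖`. -/
theorem hadamard_backward_stable (e : ℝ) (he : 0 ≤ e)
    (Hhat : (p : ℕ) → (V p → ℝ) → (V p → ℝ))
    (hbase : ∀ x : V 0 → ℝ, Hhat 0 x = x)
    (hstep : ∀ p (z : V (p + 1) → ℝ), ∃ δ₁ δ₂ : V p → ℝ,
      (∀ i, |δ₁ i| ≤ e) ∧ (∀ i, |δ₂ i| ≤ e) ∧
      (∀ i : V p, Hhat (p + 1) z (Sum.inl i) =
        (1 + δ₁ i) *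
          (Hhat p (fun a => z (Sum.inl a)) i + Hhat p (fun a => z (Sum.inr a)) i)) ∧
      (∀ i : V p, Hhat (p + 1) z (Sum.inr i) =
        (1 + δ₂ i) *
          (Hhat p (fun a => z (Sum.inl a)) i - Hhat p (fun a => z (Sum.inr a)) i))) :
    (∀ p : ℕ, (p : ℝ) * e < 1 → ∀ x : V p → ℝ, ∃ Δx : V p → ℝ,
        Hhat p x = Hexact p (x + Δx) ∧ eucNorm Δx ≤ gam e p * eucNorm x) ∧
    (∀ p : ℕ, ((p : ℝ) + 2) * e < 1 → ∀ x : V p → ℝ, ∀ δ₀ : ℝ, |δ₀| ≤ e →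
      ∀ δ' : V p → ℝ, (∀ i, |δ' i| ≤ e) →
        ∃ Δx : V p → ℝ,
          (fun i => (1 + δ' i) * ((1 + δ₀) * (2 : ℝ) ^ (-(p : ℝ) / 2)) * Hhat p x i) =
            (fun i => (2 : ℝ) ^ (-(p : ℝ) / 2) * Hexact p (x + Δx) i) ∧
          eucNorm Δx ≤ gam e (p + 2) * eucNorm x) := by
  
  have h2p : ∀ p : ℕ, ((2:ℝ)^p) ≠ 0 := fun p => by positivity
  constructor
  · -- Part 1
    intro p hpe x
    refine ⟨fun i => ((2:ℝ)^p)⁻¹ * Hexact p (fun j => Hhat p x j - Hexact p x j) i, ?_, ?_⟩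
    · have hadd : (x + fun i => ((2:ℝ)^p)⁻¹ * Hexact p (fun j => Hhat p x j - Hexact p x j) i)
          = fun i => x i + ((2:ℝ)^p)⁻¹ * Hexact p (fun j => Hhat p x j - Hexact p x j) i := rfl
      rw [hadd,
        Hexact_add p x (fun i => ((2:ℝ)^p)⁻¹ * Hexact p (fun j => Hhat p x j - Hexact p x j) i),
        Hexact_smul p (((2:ℝ)^p)⁻¹) (Hexact p (fun j => Hhat p x j - Hexact p x j)),
        Hexact_invol p (fun j => Hhat p x j - Hexact p x j)]
      funext i
      show Hhat p x i = Hexact p x i + ((2:ℝ)^p)⁻¹ * ((2:ℝ)^p * (Hhat p x i - Hexact p x i))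
      rw [← mul_assoc, inv_mul_cancel₀ (h2p p), one_mul]
      ring
    · rw [eucNorm_smul', abs_of_nonneg (by positivity : (0:ℝ) ≤ ((2:ℝ)^p)⁻¹), eucNorm_Hexact]
      have hfwd := fwd e he Hhat hbase hstep p x
      have h22 := sqrt_two_pow_sq p
      have hcg := cp_le_gam e he p hpe
      calc ((2:ℝ)^p)⁻¹ * (Real.sqrt 2 ^ p * eucNorm (fun j => Hhat p x j - Hexact p x j))
          ≤ ((2:ℝ)^p)⁻¹ * (Real.sqrt 2 ^ p * (((1+e)^p - 1) * Real.sqrt 2 ^ p * eucNorm x)) := by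
            have h1 := mul_le_mul_of_nonneg_left hfwd (by positivity : (0:ℝ) ≤ Real.sqrt 2 ^ p)
            exact mul_le_mul_of_nonneg_left h1 (by positivity)
        _ = ((1+e)^p - 1) * (((2:ℝ)^p)⁻¹ * (Real.sqrt 2 ^ p * Real.sqrt 2 ^ p)) * eucNorm x := by
            ring
        _ = ((1+e)^p - 1) * eucNorm x := by
            rw [h22, inv_mul_cancel₀ (h2p p)]; ring
        _ ≤ gam e p * eucNorm x := mul_le_mul_of_nonneg_right hcg (eucNorm_nonneg' x)
  · -- Part 2
    intro p hp2 x δ₀ hδ₀ δ' hδ'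
    refine ⟨fun i => ((2:ℝ)^p)⁻¹ *
        Hexact p (fun j => (1+δ' j) * (1+δ₀) * Hhat p x j - Hexact p x j) i, ?_, ?_⟩
    · have hHxd : Hexact p (x + fun i => ((2:ℝ)^p)⁻¹ *
          Hexact p (fun j => (1+δ' j) * (1+δ₀) * Hhat p x j - Hexact p x j) i)
          = fun i => (1+δ' i) * (1+δ₀) * Hhat p x i := by
        have hadd : (x + fun i => ((2:ℝ)^p)⁻¹ *
            Hexact p (fun j => (1+δ' j) * (1+δ₀) * Hhat p x j - Hexact p x j) i)
            = fun i => x i + ((2:ℝ)^p)⁻¹ *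
              Hexact p (fun j => (1+δ' j) * (1+δ₀) * Hhat p x j - Hexact p x j) i := rfl
        rw [hadd,
          Hexact_add p x (fun i => ((2:ℝ)^p)⁻¹ *
            Hexact p (fun j => (1+δ' j) * (1+δ₀) * Hhat p x j - Hexact p x j) i),
          Hexact_smul p (((2:ℝ)^p)⁻¹)
            (Hexact p (fun j => (1+δ' j) * (1+δ₀) * Hhat p x j - Hexact p x j)),
          Hexact_invol p (fun j => (1+δ' j) * (1+δ₀) * Hhat p x j - Hexact p x j)]
        funext i
        show Hexact p x i + ((2:ℝ)^p)⁻¹ * ((2:ℝ)^p *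
            ((1+δ' i) * (1+δ₀) * Hhat p x i - Hexact p x i))
          = (1+δ' i) * (1+δ₀) * Hhat p x i
        rw [← mul_assoc, inv_mul_cancel₀ (h2p p), one_mul]
        ring
      rw [hHxd]
      funext i
      ring
    · rw [eucNorm_smul', abs_of_nonneg (by positivity : (0:ℝ) ≤ ((2:ℝ)^p)⁻¹), eucNorm_Hexact]
      have hfwd := fwd e he Hhat hbase hstep p x
      have h22 := sqrt_two_pow_sq p
      have hhatB : eucNorm (Hhat p x) ≤ (1+e)^p * Real.sqrt 2 ^ p * eucNorm x := by
        have t := eucNorm_add_bound (Hhat p x) (Hexact p x)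
        have hU := eucNorm_Hexact p x
        linarith
      have hmu : ∀ j, |(1+δ' j)*(1+δ₀) - 1| ≤ 2*e + e^2 := by
        intro j
        have h₁ : (1+δ' j)*(1+δ₀) - 1 = δ' j + δ₀ + δ' j * δ₀ := by ring
        rw [h₁]
        calc |δ' j + δ₀ + δ' j * δ₀| ≤ |δ' j| + |δ₀| + |δ' j * δ₀| := abs_add_three _ _ _
          _ ≤ e + e + e*e := by
              refine add_le_add (add_le_add (hδ' j) hδ₀) ?_
              rw [abs_mul]; exact mul_le_mul (hδ' j) hδ₀ (abs_nonneg _) he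
          _ = 2*e + e^2 := by ring
      have hm := eucNorm_mul_le (fun j => (1+δ' j)*(1+δ₀) - 1) (Hhat p x) (2*e+e^2)
        (by positivity) hmu
      have hgsplit : (fun j => (1+δ' j) * (1+δ₀) * Hhat p x j - Hexact p x j)
          = fun j => ((1+δ' j)*(1+δ₀) - 1) * Hhat p x j + (Hhat p x j - Hexact p x j) := by
        funext j; ring
      have hg : eucNorm (fun j => (1+δ' j) * (1+δ₀) * Hhat p x j - Hexact p x j)
          ≤ ((1+e)^(p+2) - 1) * Real.sqrt 2 ^ p * eucNorm x := by
        rw [hgsplit]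
        have tri := eucNorm_triangle (fun j => ((1+δ' j)*(1+δ₀) - 1) * Hhat p x j)
          (fun j => Hhat p x j - Hexact p x j)
        have t3 := mul_le_mul_of_nonneg_left hhatB (by positivity : (0:ℝ) ≤ 2*e + e^2)
        have hpow : (1+e)^(p+2) = (1+e)^p * (1+e)^2 := by rw [pow_add]
        rw [hpow] at *
        nlinarith [tri, hm, t3, hfwd]
      have hcg := cp_le_gam e he (p+2) (by push_cast; linarith)
      calc ((2:ℝ)^p)⁻¹ * (Real.sqrt 2 ^ p *
            eucNorm (fun j => (1+δ' j) * (1+δ₀) * Hhat p x j - Hexact p x j))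
          ≤ ((2:ℝ)^p)⁻¹ * (Real.sqrt 2 ^ p *
            (((1+e)^(p+2) - 1) * Real.sqrt 2 ^ p * eucNorm x)) := by
            have h1 := mul_le_mul_of_nonneg_left hg (by positivity : (0:ℝ) ≤ Real.sqrt 2 ^ p)
            exact mul_le_mul_of_nonneg_left h1 (by positivity)
        _ = ((1+e)^(p+2) - 1) * (((2:ℝ)^p)⁻¹ * (Real.sqrt 2 ^ p * Real.sqrt 2 ^ p)) * eucNorm x := by
            ring
        _ = ((1+e)^(p+2) - 1) * eucNorm x := by
            rw [h22, inv_mul_cancel₀ (h2p p)]; ring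
        _ ≤ gam e (p + 2) * eucNorm x := mul_le_mul_of_nonneg_right hcg (eucNorm_nonneg' x)
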